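/- Let κ > 1, ξ < 0, a₀ > 0, and suppose a₁ < √(−2ξ/(κ−1)) · a₀^{(1−κ)/2}. Then there is no twice continuously differentiable function a : [0,∞) → ℝ with a(t) > 0 for all t ≥ 0, a''(t) = ξ / a(t)^κ for all t ≥ 0, a(0) = a₀, and a'(0) = a₁; that is, every positive solution of the Emden initial-value problem with these data breaks down (reaches zero) in finite time. -/

import Mathlib

open Real Set Filter Topology

/-- Antitonicity from a nonpositive derivative on a right half-line. -/
lemma antitoneOn_of_hasDerivAt_nonpos {f f' : ℝ → ℝ} {t₀ : ℝ}
    (hf : ∀ t ∈ Set.Ici t₀, HasDerivAt f (f' t) t)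
    (hf' : ∀ t ∈ Set.Ici t₀, f' t ≤ 0) :
    AntitoneOn f (Set.Ici t₀) := by
  apply antitoneOn_of_deriv_nonpos (convex_Ici t₀)
  · exact fun t ht => (hf t ht).continuousAt.continuousWithinAt
  · rw [interior_Ici]
    exact fun t ht => (hf t (Set.mem_Ici.mpr (le_of_lt ht))).differentiableAt.differentiableWithinAt
  · intro x hx
    rw [interior_Ici] at hx
    rw [(hf x (Set.mem_Ici.mpr hx.le)).deriv]
    exact hf' x (Set.mem_Ici.mpr hx.le)

/-- Emden equation, blowup case: if `κ > 1`, `ξ < 0` and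
`a₁ < √(−2ξ/(κ−1)) a₀^{(1−κ)/2}`, then there is no globally defined positive
`C²` solution on `[0,∞)` of `a'' = ξ/a^κ`, `a(0) = a₀ > 0`, `a'(0) = a₁`:
every such solution reaches zero in finite time. -/
theorem emden_blowup_finite_time
    (κ ξ a₀ a₁ : ℝ) (hκ : 1 < κ) (hξ : ξ < 0) (ha₀ : 0 < a₀)
    (ha₁ : a₁ < Real.sqrt (-2 * ξ / (κ - 1)) * a₀ ^ ((1 - κ) / 2))
    (a a' a'' : ℝ → ℝ)
    (ha : ∀ t ∈ Set.Ici (0 : ℝ), HasDerivAt a (a' t) t)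
    (ha' : ∀ t ∈ Set.Ici (0 : ℝ), HasDerivAt a' (a'' t) t)
    (ha''c : ContinuousOn a'' (Set.Ici 0))
    (hpos : ∀ t ∈ Set.Ici (0 : ℝ), 0 < a t)
    (hODE : ∀ t ∈ Set.Ici (0 : ℝ), a'' t = ξ / a t ^ κ)
    (h0 : a 0 = a₀) (h1 : a' 0 = a₁) : False := by
  have hκ1 : (0:ℝ) < κ - 1 := by linarith
  have hapow : ∀ t ∈ Set.Ici (0:ℝ), 0 < a t ^ κ :=
    fun t ht => Real.rpow_pos_of_pos (hpos t ht) κ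
  have ha''neg : ∀ t ∈ Set.Ici (0:ℝ), a'' t < 0 := by
    intro t ht
    rw [hODE t ht]
    exact div_neg_of_neg_of_pos hξ (hapow t ht)
  -- Step 1 : a' is nonnegative on [0, ∞)
  have ha'nonneg : ∀ t ∈ Set.Ici (0:ℝ), 0 ≤ a' t := by
    by_contra h
    push_neg at h
    obtain ⟨t₀, ht₀, hlt⟩ := h
    have hanti : AntitoneOn a' (Set.Ici 0) :=
      antitoneOn_of_hasDerivAt_nonpos ha' (fun t ht => (ha''neg t ht).le)
    set g : ℝ → ℝ := fun s => a s - a' t₀ * s with hg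
    have hganti : AntitoneOn g (Set.Ici t₀) := by
      apply antitoneOn_of_hasDerivAt_nonpos (f' := fun s => a' s - a' t₀)
      · intro s hs
        have hs0 : s ∈ Set.Ici (0:ℝ) := Set.mem_Ici.mpr (le_trans ht₀ hs)
        have := (ha s hs0).sub ((hasDerivAt_id s).const_mul (a' t₀))
        simp only [mul_one] at this
        exact this
      · intro s hs
        have hs0 : s ∈ Set.Ici (0:ℝ) := Set.mem_Ici.mpr (le_trans ht₀ hs)
        have := hanti ht₀ hs0 hs
        linarith
    obtain ⟨s, hsdef⟩ : ∃ s:ℝ, s = t₀ + a t₀ / (-(a' t₀)) + 1 := ⟨_, rfl⟩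
    have hdivnn : 0 ≤ a t₀ / (-(a' t₀)) :=
      div_nonneg (hpos t₀ ht₀).le (by linarith)
    have hss : s ∈ Set.Ici t₀ := by rw [hsdef, Set.mem_Ici]; linarith
    have hs0 : s ∈ Set.Ici (0:ℝ) := Set.mem_Ici.mpr (le_trans ht₀ hss)
    have hne : a' t₀ ≠ 0 := ne_of_lt hlt
    have hne' : -(a' t₀) ≠ 0 := neg_ne_zero.mpr hne
    have key : a' t₀ * (a t₀ / (-(a' t₀))) = - a t₀ := by
      rw [div_neg, mul_neg, neg_inj, mul_comm, div_mul_cancel₀ _ hne]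
    have hle : g s ≤ g t₀ := hganti (Set.mem_Ici.mpr le_rfl) hss hss
    have hps : 0 < a s := hpos s hs0
    simp only [hg] at hle
    have hs_exp : a' t₀ * s = a' t₀ * t₀ + a' t₀ * (a t₀ / (-(a' t₀))) + a' t₀ := by
      rw [hsdef]; ring
    linarith [hle, key, hps, hs_exp, hlt]
  have ha₁0 : 0 ≤ a₁ := h1 ▸ ha'nonneg 0 Set.self_mem_Ici
  -- Energy
  set E : ℝ → ℝ := fun t => a' t ^ 2 + (2 * ξ / (κ - 1)) * a t ^ (1 - κ) with hE
  have hEderiv : ∀ t ∈ Set.Ici (0:ℝ), HasDerivAt E 0 t := by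
    intro t ht
    have h1' : HasDerivAt (fun t => a' t ^ 2) (2 * a' t * a'' t) t := by
      have := (ha' t ht).fun_pow 2
      simpa [mul_comm, mul_assoc] using this
    have h2' : HasDerivAt (fun t => a t ^ (1 - κ))
        ((1 - κ) * a t ^ (1 - κ - 1) * a' t) t := by
      have hcomp := (Real.hasDerivAt_rpow_const
        (x := a t) (p := 1 - κ) (Or.inl (hpos t ht).ne')).comp t (ha t ht)
      exact hcomp
    have := h1'.add (h2'.const_mul (2 * ξ / (κ - 1)))
    refine this.congr_deriv (Eq.symm ?_)
    have hne : a t ^ κ ≠ 0 := (hapow t ht).ne'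
    have hexp : a t ^ (1 - κ - 1) = (a t ^ κ)⁻¹ := by
      rw [show (1 - κ - 1) = -κ by ring, Real.rpow_neg (hpos t ht).le]
    rw [hODE t ht, hexp]
    field_simp
    ring
  have hEconst : ∀ t ∈ Set.Ici (0:ℝ), E t = E 0 := by
    intro t ht
    have h1' : AntitoneOn E (Set.Ici 0) :=
      antitoneOn_of_hasDerivAt_nonpos (f' := fun _ => (0:ℝ)) hEderiv
        (fun _ _ => le_rfl)
    have h2' : AntitoneOn (fun t => -E t) (Set.Ici 0) :=
      antitoneOn_of_hasDerivAt_nonpos (f' := fun _ => (0:ℝ))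
        (fun t ht => by simpa using (hEderiv t ht).fun_neg) (fun _ _ => le_rfl)
    have := h1' (Set.mem_Ici.mpr le_rfl) ht ht
    have := h2' (Set.mem_Ici.mpr le_rfl) ht ht
    simp only at *
    linarith
  -- E 0 < 0
  have hcpos : 0 < -2 * ξ / (κ - 1) := by
    apply div_pos (by linarith) hκ1
  have hbpos : 0 < a₀ ^ ((1 - κ) / 2) := Real.rpow_pos_of_pos ha₀ _
  have hsq : (Real.sqrt (-2 * ξ / (κ - 1)) * a₀ ^ ((1 - κ) / 2)) ^ 2
      = (-2 * ξ / (κ - 1)) * a₀ ^ (1 - κ) := by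
    rw [mul_pow, sq, Real.mul_self_sqrt hcpos.le, sq,
      ← Real.rpow_add ha₀]
    ring_nf
  have hE0neg : E 0 < 0 := by
    have ha₁sq : a₁ ^ 2 < (-2 * ξ / (κ - 1)) * a₀ ^ (1 - κ) := by
      rw [← hsq]
      have := mul_self_lt_mul_self ha₁0 ha₁
      nlinarith
    simp only [hE, h0, h1]
    have : 2 * ξ / (κ - 1) = -(-2 * ξ / (κ - 1)) := by ring
    rw [this]
    nlinarith
  -- Uniform bound on a
  set c : ℝ := -2 * ξ / (κ - 1) with hc
  have hmpos : 0 < -E 0 / c := div_pos (by linarith) hcpos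
  set m : ℝ := -E 0 / c with hm
  set M : ℝ := m ^ (1 / (1 - κ)) with hM
  have hMpos : 0 < M := Real.rpow_pos_of_pos hmpos _
  have hMk : M ^ (1 - κ) = m := by
    have h1κ : (1:ℝ) - κ ≠ 0 := by linarith
    rw [hM, ← Real.rpow_mul hmpos.le, one_div_mul_cancel h1κ]
    exact Real.rpow_one m
  have haM : ∀ t ∈ Set.Ici (0:ℝ), a t ≤ M := by
    intro t ht
    by_contra hcon
    push_neg at hcon
    have hlt : a t ^ (1 - κ) < M ^ (1 - κ) :=
      Real.rpow_lt_rpow_of_neg hMpos hcon (by linarith)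
    rw [hMk] at hlt
    -- from energy: c * a t ^ (1-κ) ≥ -E 0
    have hEt : a' t ^ 2 - c * a t ^ (1 - κ) = E 0 := by
      rw [← hEconst t ht, hE]
      simp only
      rw [hc]; ring
    have hsq' : 0 ≤ a' t ^ 2 := sq_nonneg _
    have hge : c * a t ^ (1 - κ) ≥ -E 0 := by linarith
    have hmle : m ≤ a t ^ (1 - κ) := by
      rw [hm, div_le_iff₀ hcpos]
      linarith
    linarith
  -- a'' bounded away from 0
  have hMk2 : 0 < M ^ κ := Real.rpow_pos_of_pos hMpos κ
  have ha''le : ∀ t ∈ Set.Ici (0:ℝ), a'' t ≤ ξ / M ^ κ := by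
    intro t ht
    rw [hODE t ht, div_le_div_iff₀ (hapow t ht) hMk2]
    have hpk : a t ^ κ ≤ M ^ κ :=
      Real.rpow_le_rpow (hpos t ht).le (haM t ht) (by linarith)
    nlinarith
  set δ : ℝ := -(ξ / M ^ κ) with hδ
  have hδpos : 0 < δ := by
    rw [hδ]
    have := div_neg_of_neg_of_pos hξ hMk2
    linarith
  -- final contradiction
  have hganti : AntitoneOn (fun t => a' t + δ * t) (Set.Ici 0) := by
    apply antitoneOn_of_hasDerivAt_nonpos (f' := fun t => a'' t + δ)
    · intro t ht
      have := (ha' t ht).add ((hasDerivAt_id t).const_mul δ)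
      simp only [mul_one] at this
      exact this
    · intro t ht
      have := ha''le t ht
      rw [hδ]
      linarith
  set T : ℝ := (a₁ + 1) / δ with hT
  have hT0 : 0 ≤ T := div_nonneg (by linarith) hδpos.le
  have hle := hganti (Set.mem_Ici.mpr le_rfl) (Set.mem_Ici.mpr hT0) hT0
  simp only [h1] at hle
  have hδT : δ * T = a₁ + 1 := by
    rw [hT]
    field_simp
  have := ha'nonneg T hT0
  -- hle : a' T + δ * T ≤ a₁ + δ * 0
  nlinarith [hle, hδT, this]
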